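/- Let V be uniformly distributed on a finite set 𝒱 with |𝒱| ≥ 2, let ρ : 𝒱 × 𝒱 → ℝ be symmetric, and let t ≥ 0 with neighborhood sizes N_max_t and N_min_t satisfying |𝒱| − N_min_t > N_max_t. Then for any Markov chain V → X → V̂, ℙ(ρ(V̂, V) > t) ≥ 1 − (I(V; X) + log 2) / log(|𝒱| / N_max_t), where I(V; X) is the mutual information between V and X. -/

import Mathlib

open MeasureTheory ProbabilityTheory Real
open scoped Classical ENNReal

/-- Shannon entropy (natural log) of a random variable with values in a finite set. -/
noncomputable def shannonEntropy {Ω 𝒱 : Type*} [MeasurableSpace Ω] [Fintype 𝒱]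
    (μ : Measure Ω) (V : Ω → 𝒱) : ℝ :=
  ∑ v : 𝒱, Real.negMulLog (μ (V ⁻¹' {v})).toReal

/-- Conditional Shannon entropy `H(V | X)` (natural log) of a finitely-valued random
variable `V` given a general random variable `X`. -/
noncomputable def condEntropyGen {Ω 𝒱 𝒳 : Type*} [MeasurableSpace Ω] [Fintype 𝒱]
    [MeasurableSpace 𝒳] (μ : Measure Ω) (V : Ω → 𝒱) (X : Ω → 𝒳) : ℝ :=
  ∫ ω, ∑ v : 𝒱, Real.negMulLog
    ((μ[(V ⁻¹' {v}).indicator (fun _ => (1 : ℝ)) | MeasurableSpace.comap X inferInstance]) ω) ∂μ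

/-- Mutual information `I(V; X) = H(V) - H(V | X)` for a finitely-valued `V`. -/
noncomputable def mutualInfoFin {Ω 𝒱 𝒳 : Type*} [MeasurableSpace Ω] [Fintype 𝒱]
    [MeasurableSpace 𝒳] (μ : Measure Ω) (V : Ω → 𝒱) (X : Ω → 𝒳) : ℝ :=
  shannonEntropy μ V - condEntropyGen μ V X

/-- Markov chain `V → X → W`: `V` and `W` are conditionally independent given `X`. -/
def MarkovChain {Ω 𝒜 𝒳 ℬ : Type*} [MeasurableSpace Ω] [MeasurableSpace 𝒜]
    [MeasurableSpace 𝒳] [MeasurableSpace ℬ]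
    (μ : Measure Ω) (V : Ω → 𝒜) (X : Ω → 𝒳) (W : Ω → ℬ) : Prop :=
  ∀ (A : Set 𝒜) (B : Set ℬ), MeasurableSet A → MeasurableSet B →
    (μ[fun ω => (V ⁻¹' A).indicator (fun _ => (1 : ℝ)) ω
          * (W ⁻¹' B).indicator (fun _ => (1 : ℝ)) ω
        | MeasurableSpace.comap X inferInstance])
      =ᵐ[μ]
    fun ω => (μ[(V ⁻¹' A).indicator (fun _ => (1 : ℝ)) | MeasurableSpace.comap X inferInstance]) ω
          * (μ[(W ⁻¹' B).indicator (fun _ => (1 : ℝ)) | MeasurableSpace.comap X inferInstance]) ω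

/-- **Mutual-information form of the distance-based Fano inequality (Corollary 1).**
If `V` is uniform on a finite set `𝒱` with `|𝒱| ≥ 2` and `|𝒱| - N_min_t > N_max_t`, then
for any Markov chain `V → X → V̂`,
`ℙ(ρ(V̂, V) > t) ≥ 1 - (I(V; X) + log 2) / log(|𝒱| / N_max_t)`. -/
lemma aux_sum_negMulLog_le {𝒱 : Type*} [Fintype 𝒱] (B : Finset 𝒱) (q : 𝒱 → ℝ)
    (hq : ∀ v ∈ B, 0 ≤ q v) :
    ∑ v ∈ B, negMulLog (q v) ≤ negMulLog (∑ v ∈ B, q v) + (∑ v ∈ B, q v) * Real.log B.card := by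
  rcases B.eq_empty_or_nonempty with rfl | hB
  · simp
  have hn : (0:ℝ) < B.card := by exact_mod_cast Finset.card_pos.mpr hB
  set n : ℝ := (B.card : ℝ) with hndef
  set s : ℝ := ∑ v ∈ B, q v with hsdef
  have hjensen := Real.concaveOn_negMulLog.le_map_sum
    (t := B) (w := fun _ => n⁻¹) (p := q)
    (fun i _ => by positivity)
    (by simp [Finset.sum_const, hndef]; field_simp)
    (fun i hi => Set.mem_Ici.mpr (hq i hi))
  simp only [smul_eq_mul, ← Finset.mul_sum] at hjensen
  have h2 : ∑ v ∈ B, negMulLog (q v) ≤ n * negMulLog (n⁻¹ * s) := by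
    have := mul_le_mul_of_nonneg_left hjensen hn.le
    calc ∑ v ∈ B, negMulLog (q v) = n * (n⁻¹ * ∑ v ∈ B, negMulLog (q v)) := by
          field_simp
      _ ≤ n * negMulLog (n⁻¹ * s) := this
  refine h2.trans_eq ?_
  rw [mul_comm n⁻¹ s, negMulLog_mul]
  simp only [Real.negMulLog, Real.log_inv]
  field_simp

lemma aux_key_fin {𝒱 : Type*} [Fintype 𝒱] [Nonempty 𝒱] (q r : 𝒱 → ℝ)
    (hq0 : ∀ v, 0 ≤ q v) (hq1 : ∑ v, q v = 1)
    (hr0 : ∀ v, 0 ≤ r v) (hr1 : ∑ v, r v = 1)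
    (P : 𝒱 → Finset 𝒱) (Nmax : ℕ) (hP : ∀ w, (P w).card ≤ Nmax)
    (h1 : 1 ≤ Nmax) (h2 : Nmax < Fintype.card 𝒱) :
    ∑ v, negMulLog (q v) ≤ Real.log (Fintype.card 𝒱) + Real.log 2
      - (∑ w, r w * ∑ v ∈ P w, q v) * Real.log ((Fintype.card 𝒱 : ℝ) / Nmax) := by
  classical
  set K := Fintype.card 𝒱 with hK
  have hK0 : 0 < K := lt_of_le_of_lt (Nat.zero_le _) h2
  have hL : Real.log ((K : ℝ) / Nmax) = Real.log K - Real.log Nmax := by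
    rw [Real.log_div (by positivity) (by positivity)]
  have hLpos : 0 ≤ Real.log ((K : ℝ) / Nmax) := by
    apply Real.log_nonneg
    rw [le_div_iff₀ (by positivity)]
    simpa using (Nat.cast_le (α := ℝ)).mpr h2.le
  -- choose the best w
  obtain ⟨w0, -, hw0⟩ := Finset.exists_mem_eq_sup' Finset.univ_nonempty
    (fun w => ∑ v ∈ P w, q v)
  set s : ℝ := ∑ v ∈ P w0, q v with hsdef
  have hSle : (∑ w, r w * ∑ v ∈ P w, q v) ≤ s := by
    calc ∑ w, r w * ∑ v ∈ P w, q v ≤ ∑ w, r w * s := by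
          apply Finset.sum_le_sum
          intro w _
          exact mul_le_mul_of_nonneg_left
            ((Finset.le_sup' _ (Finset.mem_univ w)).trans_eq hw0) (hr0 w)
      _ = s := by rw [← Finset.sum_mul, hr1, one_mul]
  set B := P w0 with hB
  have hs0 : 0 ≤ s := Finset.sum_nonneg fun v _ => hq0 v
  have hs1 : s ≤ 1 := hq1 ▸ Finset.sum_le_univ_sum_of_nonneg hq0
  have hsplit : ∑ v ∈ B, q v + ∑ v ∈ Bᶜ, q v = 1 := by
    rw [Finset.sum_add_sum_compl, hq1]
  have hcompl : ∑ v ∈ Bᶜ, q v = 1 - s := by linarith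
  have hcardc : (Bᶜ.card : ℝ) = (K : ℝ) - B.card := by
    rw [Finset.card_compl]
    exact_mod_cast Nat.cast_sub (Finset.card_le_univ B)
  have b1 := aux_sum_negMulLog_le B q (fun v _ => hq0 v)
  have b2 := aux_sum_negMulLog_le Bᶜ q (fun v _ => hq0 v)
  rw [← hsdef] at b1
  rw [hcompl] at b2
  have hlogB : Real.log (B.card) ≤ Real.log Nmax := by
    rcases Nat.eq_zero_or_pos B.card with h | h
    · rw [h]; simpa using Real.log_nonneg (by exact_mod_cast h1)
    · exact Real.log_le_log (by exact_mod_cast h) (by exact_mod_cast hP w0)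
  have hlogBc : Real.log (Bᶜ.card) ≤ Real.log K := by
    rcases Nat.eq_zero_or_pos Bᶜ.card with h | h
    · rw [h]; simpa using Real.log_nonneg (by exact_mod_cast hK0)
    · exact Real.log_le_log (by exact_mod_cast h) (by exact_mod_cast Finset.card_le_univ _)
  have hbin : negMulLog s + negMulLog (1 - s) ≤ Real.log 2 := by
    rw [← Real.binEntropy_eq_negMulLog_add_negMulLog_one_sub]
    exact Real.binEntropy_le_log_two
  have htot : ∑ v, negMulLog (q v) = ∑ v ∈ B, negMulLog (q v) + ∑ v ∈ Bᶜ, negMulLog (q v) :=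
    (Finset.sum_add_sum_compl B _).symm
  have key : ∑ v, negMulLog (q v) ≤ Real.log 2 + s * Real.log Nmax + (1 - s) * Real.log K := by
    rw [htot]
    have t1 : s * Real.log B.card ≤ s * Real.log Nmax :=
      mul_le_mul_of_nonneg_left hlogB hs0
    have t2 : (1 - s) * Real.log Bᶜ.card ≤ (1 - s) * Real.log K :=
      mul_le_mul_of_nonneg_left hlogBc (by linarith)
    nlinarith [b1, b2, hbin]
  have final : Real.log 2 + s * Real.log Nmax + (1 - s) * Real.log K
      = Real.log K + Real.log 2 - s * Real.log ((K : ℝ) / Nmax) := by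
    rw [hL]; ring
  rw [final] at key
  have : (∑ w, r w * ∑ v ∈ P w, q v) * Real.log ((K : ℝ) / Nmax)
      ≤ s * Real.log ((K : ℝ) / Nmax) := mul_le_mul_of_nonneg_right hSle hLpos
  linarith

lemma aux_measure {Ω 𝒱 : Type*} (m : MeasurableSpace Ω) [mΩ : MeasurableSpace Ω]
    [Fintype 𝒱] [Nonempty 𝒱] [MeasurableSpace 𝒱] [MeasurableSingletonClass 𝒱]
    (hm : m ≤ mΩ)
    (μ : Measure Ω) [IsProbabilityMeasure μ]
    (V Vhat : Ω → 𝒱) (hV : Measurable V) (hVhat : Measurable Vhat)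
    (hmarkov2 : ∀ v w : 𝒱,
      (μ[fun ω => (V ⁻¹' {v}).indicator (fun _ => (1:ℝ)) ω
            * (Vhat ⁻¹' {w}).indicator (fun _ => (1:ℝ)) ω | m])
        =ᵐ[μ]
      fun ω => (μ[(V ⁻¹' {v}).indicator (fun _ => (1:ℝ)) | m]) ω
            * (μ[(Vhat ⁻¹' {w}).indicator (fun _ => (1:ℝ)) | m]) ω)
    (ρ : 𝒱 → 𝒱 → ℝ) (t : ℝ) (Nmax : ℕ)
    (hP : ∀ w : 𝒱, (Finset.univ.filter fun v : 𝒱 => ρ w v ≤ t).card ≤ Nmax)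
    (h1 : 1 ≤ Nmax) (h2 : Nmax < Fintype.card 𝒱) :
    ∫ ω, ∑ v : 𝒱, Real.negMulLog ((μ[(V ⁻¹' {v}).indicator (fun _ => (1 : ℝ)) | m]) ω) ∂μ
      ≤ Real.log (Fintype.card 𝒱) + Real.log 2
        - (μ {ω | ρ (Vhat ω) (V ω) ≤ t}).toReal
            * Real.log ((Fintype.card 𝒱 : ℝ) / Nmax) := by
  classical
  set f : 𝒱 → Ω → ℝ := fun v => (V ⁻¹' {v}).indicator (fun _ => (1 : ℝ)) with hfdef
  set g : 𝒱 → Ω → ℝ := fun w => (Vhat ⁻¹' {w}).indicator (fun _ => (1 : ℝ)) with hgdef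
  set q : 𝒱 → Ω → ℝ := fun v => μ[f v | m] with hqdef
  set r : 𝒱 → Ω → ℝ := fun w => μ[g w | m] with hrdef
  have hfint : ∀ v, Integrable (f v) μ := fun v =>
    (integrable_const (1 : ℝ)).indicator (hV (measurableSet_singleton v))
  have hgint : ∀ w, Integrable (g w) μ := fun w =>
    (integrable_const (1 : ℝ)).indicator (hVhat (measurableSet_singleton w))
  -- a.e. properties of q, r
  have hq0 : ∀ v, 0 ≤ᵐ[μ] q v := fun v =>
    condExp_nonneg (ae_of_all _ fun ω => Set.indicator_nonneg (fun _ _ => zero_le_one) ω)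
  have hr0 : ∀ w, 0 ≤ᵐ[μ] r w := fun w =>
    condExp_nonneg (ae_of_all _ fun ω => Set.indicator_nonneg (fun _ _ => zero_le_one) ω)
  have hq1 : ∀ v, q v ≤ᵐ[μ] fun _ => (1 : ℝ) := by
    intro v
    have h := condExp_mono (m := m) (hfint v) (integrable_const (1 : ℝ))
      (ae_of_all _ fun ω => Set.indicator_le_self' (fun _ _ => zero_le_one) ω)
    rwa [condExp_const hm] at h
  have hr1 : ∀ w, r w ≤ᵐ[μ] fun _ => (1 : ℝ) := by
    intro w
    have h := condExp_mono (m := m) (hgint w) (integrable_const (1 : ℝ))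
      (ae_of_all _ fun ω => Set.indicator_le_self' (fun _ _ => zero_le_one) ω)
    rwa [condExp_const hm] at h
  have hsumf : ∑ v : 𝒱, f v = fun _ => (1 : ℝ) := by
    funext ω
    simp [hfdef, Finset.sum_apply, Set.indicator_apply]
  have hsumg : ∑ w : 𝒱, g w = fun _ => (1 : ℝ) := by
    funext ω
    simp [hgdef, Finset.sum_apply, Set.indicator_apply]
  have hqsum : ∀ᵐ ω ∂μ, ∑ v, q v ω = 1 := by
    have h := (condExp_finsetSum (m := m) (s := Finset.univ) (fun v (_ : v ∈ Finset.univ) => hfint v)).symm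
    rw [hsumf, condExp_const hm] at h
    filter_upwards [h] with ω hω
    simpa [Finset.sum_apply] using hω
  have hrsum : ∀ᵐ ω ∂μ, ∑ w, r w ω = 1 := by
    have h := (condExp_finsetSum (m := m) (s := Finset.univ) (fun w (_ : w ∈ Finset.univ) => hgint w)).symm
    rw [hsumg, condExp_const hm] at h
    filter_upwards [h] with ω hω
    simpa [Finset.sum_apply] using hω
    -- measurability
  have hqmeas : ∀ v, AEStronglyMeasurable (q v) μ := fun v =>
    (stronglyMeasurable_condExp.mono hm).aestronglyMeasurable
  have hrmeas : ∀ w, AEStronglyMeasurable (r w) μ := fun w =>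
    (stronglyMeasurable_condExp.mono hm).aestronglyMeasurable
  set P : Finset (𝒱 × 𝒱) := Finset.univ.filter (fun p => ρ p.2 p.1 ≤ t) with hPdef
  set A : 𝒱 × 𝒱 → Set Ω := fun p => V ⁻¹' {p.1} ∩ Vhat ⁻¹' {p.2} with hAdef
  have hAmeas : ∀ p, MeasurableSet (A p) := fun p =>
    (hV (measurableSet_singleton p.1)).inter (hVhat (measurableSet_singleton p.2))
  have hfg : ∀ p : 𝒱 × 𝒱, (fun ω => f p.1 ω * g p.2 ω) = (A p).indicator (fun _ => (1:ℝ)) := by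
    intro p
    funext ω
    by_cases h1 : ω ∈ V ⁻¹' {p.1} <;> by_cases h2 : ω ∈ Vhat ⁻¹' {p.2} <;>
      simp [hfdef, hgdef, hAdef, Set.indicator_apply, h1, h2]
  have hintqr : ∀ p : 𝒱 × 𝒱, ∫ ω, q p.1 ω * r p.2 ω ∂μ = (μ (A p)).toReal := by
    intro p
    have e1 : ∫ ω, q p.1 ω * r p.2 ω ∂μ
        = ∫ ω, (μ[fun ω => f p.1 ω * g p.2 ω | m]) ω ∂μ :=
      integral_congr_ae (hmarkov2 p.1 p.2).symm
    rw [e1, integral_condExp hm, hfg p, integral_indicator_const (1:ℝ) (hAmeas p),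
      smul_eq_mul, mul_one, measureReal_def]
  have hCeq : {ω | ρ (Vhat ω) (V ω) ≤ t} = ⋃ p ∈ P, A p := by
    ext ω
    simp only [Set.mem_setOf_eq, Set.mem_iUnion, hAdef, hPdef, Finset.mem_filter,
      Finset.mem_univ, true_and, Set.mem_inter_iff, Set.mem_preimage, Set.mem_singleton_iff]
    constructor
    · intro h; exact ⟨(V ω, Vhat ω), h, rfl, rfl⟩
    · rintro ⟨p, hp, hh1, hh2⟩; rw [← hh1, ← hh2] at hp; exact hp
  have hdisj : (↑P : Set (𝒱 × 𝒱)).PairwiseDisjoint A := by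
    intro p _ p' _ hne
    rw [Function.onFun, Set.disjoint_left]
    intro ω hω hω'
    simp only [hAdef, Set.mem_inter_iff, Set.mem_preimage, Set.mem_singleton_iff] at hω hω'
    exact hne (Prod.ext (hω.1.symm.trans hω'.1) (hω.2.symm.trans hω'.2))
  have hμC : (μ {ω | ρ (Vhat ω) (V ω) ≤ t}).toReal = ∑ p ∈ P, (μ (A p)).toReal := by
    rw [hCeq, measure_biUnion_finset hdisj (fun p _ => hAmeas p), ENNReal.toReal_sum]
    exact fun p _ => measure_ne_top μ _
  set S : Ω → ℝ := fun ω => ∑ p ∈ P, q p.1 ω * r p.2 ω with hSdef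
  have hqrint : ∀ (v w : 𝒱), Integrable (fun ω => q v ω * r w ω) μ := by
    intro v w
    refine Integrable.mono' (integrable_const (1:ℝ)) ((hqmeas v).mul (hrmeas w)) ?_
    filter_upwards [hq0 v, hq1 v, hr0 w, hr1 w] with ω hh1 hh2 hh3 hh4
    rw [Real.norm_eq_abs, abs_mul, abs_of_nonneg hh1, abs_of_nonneg hh3]
    calc q v ω * r w ω ≤ 1 * 1 := mul_le_mul hh2 hh4 hh3 zero_le_one
      _ = 1 := mul_one 1
  have hSint : Integrable S μ := integrable_finset_sum P (fun p _ => hqrint p.1 p.2)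
  have hSval : ∫ ω, S ω ∂μ = (μ {ω | ρ (Vhat ω) (V ω) ≤ t}).toReal := by
    rw [hμC]
    calc ∫ ω, S ω ∂μ = ∑ p ∈ P, ∫ ω, q p.1 ω * r p.2 ω ∂μ :=
        integral_finset_sum P (fun p _ => hqrint p.1 p.2)
      _ = ∑ p ∈ P, (μ (A p)).toReal := Finset.sum_congr rfl fun p _ => hintqr p
  have hbound : ∀ᵐ ω ∂μ, ∑ v, Real.negMulLog (q v ω)
      ≤ Real.log (Fintype.card 𝒱) + Real.log 2
        - S ω * Real.log ((Fintype.card 𝒱 : ℝ) / Nmax) := by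
    filter_upwards [ae_all_iff.mpr hq0, ae_all_iff.mpr hr0, hqsum, hrsum]
      with ω hh1 hh2 hh3 hh4
    have key := aux_key_fin (fun v => q v ω) (fun w => r w ω) hh1 hh3 hh2 hh4
      (fun w => Finset.univ.filter (fun v => ρ w v ≤ t)) Nmax hP h1 h2
    have hSw : S ω = ∑ w, r w ω * ∑ v ∈ Finset.univ.filter (fun v => ρ w v ≤ t), q v ω := by
      rw [hSdef]
      simp only [Finset.mul_sum]
      rw [hPdef, Finset.sum_filter, Fintype.sum_prod_type, Finset.sum_comm]
      simp only [Finset.sum_filter]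
      exact Finset.sum_congr rfl fun w _ => Finset.sum_congr rfl fun v _ => by
        split <;> ring
    rw [hSw]
    exact key
  obtain ⟨C0, hC0⟩ : ∃ C0, ∀ x ∈ Set.Icc (0:ℝ) 1, ‖Real.negMulLog x‖ ≤ C0 :=
    isCompact_Icc.exists_bound_of_continuousOn Real.continuous_negMulLog.continuousOn
  have hFmeas : AEStronglyMeasurable (fun ω => ∑ v, Real.negMulLog (q v ω)) μ := by
    apply Finset.aestronglyMeasurable_fun_sum
    intro v _
    exact Real.continuous_negMulLog.comp_aestronglyMeasurable (hqmeas v)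
  have hFint : Integrable (fun ω => ∑ v, Real.negMulLog (q v ω)) μ := by
    refine Integrable.mono' (integrable_const ((Fintype.card 𝒱 : ℝ) * C0)) hFmeas ?_
    filter_upwards [ae_all_iff.mpr hq0, ae_all_iff.mpr hq1] with ω hh1 hh2
    rw [Real.norm_eq_abs]
    calc |∑ v, Real.negMulLog (q v ω)| ≤ ∑ v, |Real.negMulLog (q v ω)| :=
        Finset.abs_sum_le_sum_abs _ _
      _ ≤ ∑ _v : 𝒱, C0 := Finset.sum_le_sum fun v _ => hC0 _ ⟨hh1 v, hh2 v⟩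
      _ = (Fintype.card 𝒱 : ℝ) * C0 := by
          rw [Finset.sum_const, nsmul_eq_mul, Finset.card_univ]
  have hGint : Integrable (fun ω => Real.log (Fintype.card 𝒱) + Real.log 2
      - S ω * Real.log ((Fintype.card 𝒱 : ℝ) / Nmax)) μ :=
    (integrable_const _).sub (hSint.mul_const _)
  have hmono := integral_mono_ae hFint hGint hbound
  have hGval : ∫ ω, (Real.log (Fintype.card 𝒱) + Real.log 2
      - S ω * Real.log ((Fintype.card 𝒱 : ℝ) / Nmax)) ∂μ
      = Real.log (Fintype.card 𝒱) + Real.log 2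
        - (μ {ω | ρ (Vhat ω) (V ω) ≤ t}).toReal
            * Real.log ((Fintype.card 𝒱 : ℝ) / Nmax) := by
    rw [integral_sub (integrable_const _) (hSint.mul_const _), integral_const,
      integral_mul_const, hSval]
    simp [measure_univ]
  exact hmono.trans_eq hGval

theorem distance_fano_mutual_information
    {Ω 𝒳 𝒱 : Type*} [MeasurableSpace Ω] [MeasurableSpace 𝒳]
    [Fintype 𝒱] [MeasurableSpace 𝒱] [MeasurableSingletonClass 𝒱]
    (hcard : 2 ≤ Fintype.card 𝒱)
    (μ : Measure Ω) [IsProbabilityMeasure μ]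
    (V : Ω → 𝒱) (X : Ω → 𝒳) (Vhat : Ω → 𝒱)
    (hV : Measurable V) (hX : Measurable X) (hVhat : Measurable Vhat)
    (huniform : ∀ v : 𝒱, μ (V ⁻¹' {v}) = (Fintype.card 𝒱 : ℝ≥0∞)⁻¹)
    (hmarkov : MarkovChain μ V X Vhat)
    (ρ : 𝒱 → 𝒱 → ℝ) (hsymm : ∀ v w, ρ v w = ρ w v)
    (t : ℝ) (ht : 0 ≤ t)
    (Nmax Nmin : ℕ)
    (hNmax : Nmax = Finset.univ.sup fun v : 𝒱 =>
      (Finset.univ.filter fun v' : 𝒱 => ρ v v' ≤ t).card)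
    (hNmin : Nmin = sInf (Set.range fun v : 𝒱 =>
      (Finset.univ.filter fun v' : 𝒱 => ρ v v' ≤ t).card))
    (hsep : Nmax + Nmin < Fintype.card 𝒱) :
    (μ {ω | ρ (Vhat ω) (V ω) > t}).toReal
      ≥ 1 - (mutualInfoFin μ V X + Real.log 2)
          / Real.log ((Fintype.card 𝒱 : ℝ) / Nmax) := by
  classical
  have hVne : Nonempty 𝒱 := Fintype.card_pos_iff.mp (by omega)
  rcases Nat.eq_zero_or_pos Nmax with h0 | hNpos
  · -- trivial case: `Nmax = 0`
    have hall : ∀ w v : 𝒱, t < ρ w v := by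
      intro w v
      by_contra h
      push_neg at h
      have hmem : v ∈ Finset.univ.filter fun v' : 𝒱 => ρ w v' ≤ t := by simp [h]
      have hle : (Finset.univ.filter fun v' : 𝒱 => ρ w v' ≤ t).card ≤ Nmax := by
        rw [hNmax]
        exact Finset.le_sup (f := fun v : 𝒱 => (Finset.univ.filter fun v' : 𝒱 => ρ v v' ≤ t).card)
          (Finset.mem_univ w)
      rw [h0, Nat.le_zero, Finset.card_eq_zero] at hle
      simp [hle] at hmem
    have hset : {ω | ρ (Vhat ω) (V ω) > t} = Set.univ :=
      Set.eq_univ_iff_forall.mpr fun ω => hall _ _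
    rw [hset, h0]
    simp
  -- main case
  have hNK : Nmax < Fintype.card 𝒱 := by omega
  have hLpos : 0 < Real.log ((Fintype.card 𝒱 : ℝ) / Nmax) := by
    apply Real.log_pos
    rw [lt_div_iff₀ (by exact_mod_cast hNpos)]
    simpa using (Nat.cast_lt (α := ℝ)).mpr hNK
  have hP : ∀ w : 𝒱, (Finset.univ.filter fun v : 𝒱 => ρ w v ≤ t).card ≤ Nmax := by
    intro w
    rw [hNmax]
    exact Finset.le_sup (f := fun v : 𝒱 => (Finset.univ.filter fun v' : 𝒱 => ρ v v' ≤ t).card)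
      (Finset.mem_univ w)
  have hmain := aux_measure (MeasurableSpace.comap X inferInstance) hX.comap_le μ V Vhat
    hV hVhat
    (fun v w => hmarkov {v} {w} (measurableSet_singleton v) (measurableSet_singleton w))
    ρ t Nmax hP hNpos hNK
  have hKne : (Fintype.card 𝒱 : ℝ) ≠ 0 := by positivity
  have hH : shannonEntropy μ V = Real.log (Fintype.card 𝒱) := by
    simp only [shannonEntropy, huniform, ENNReal.toReal_inv, ENNReal.toReal_natCast,
      Real.negMulLog, Real.log_inv, Finset.sum_const, Finset.card_univ, nsmul_eq_mul]
    field_simp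
  have hce : condEntropyGen μ V X
      ≤ Real.log (Fintype.card 𝒱) + Real.log 2
        - (μ {ω | ρ (Vhat ω) (V ω) ≤ t}).toReal
            * Real.log ((Fintype.card 𝒱 : ℝ) / Nmax) := hmain
  -- the error event is the complement of the "correct" event
  have hCm : MeasurableSet {ω | ρ (Vhat ω) (V ω) ≤ t} := by
    have hCeq : {ω | ρ (Vhat ω) (V ω) ≤ t} =
        ⋃ p ∈ (Finset.univ.filter (fun p : 𝒱 × 𝒱 => ρ p.2 p.1 ≤ t)),
          (V ⁻¹' {p.1} ∩ Vhat ⁻¹' {p.2}) := by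
      ext ω
      simp only [Set.mem_setOf_eq, Set.mem_iUnion, Finset.mem_filter,
        Finset.mem_univ, true_and, Set.mem_inter_iff, Set.mem_preimage, Set.mem_singleton_iff]
      constructor
      · intro h; exact ⟨(V ω, Vhat ω), h, rfl, rfl⟩
      · rintro ⟨p, hp, hh1, hh2⟩; rw [← hh1, ← hh2] at hp; exact hp
    rw [hCeq]
    exact Finset.measurableSet_biUnion _ fun p _ =>
      (hV (measurableSet_singleton p.1)).inter (hVhat (measurableSet_singleton p.2))
  have hcompl : {ω | ρ (Vhat ω) (V ω) > t} = {ω | ρ (Vhat ω) (V ω) ≤ t}ᶜ := by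
    ext ω; simp [not_le]
  have hpE : (μ {ω | ρ (Vhat ω) (V ω) > t}).toReal
      = 1 - (μ {ω | ρ (Vhat ω) (V ω) ≤ t}).toReal := by
    rw [hcompl, measure_compl hCm (measure_ne_top μ _), measure_univ,
      ENNReal.toReal_sub_of_le prob_le_one ENNReal.one_ne_top, ENNReal.toReal_one]
  have hIdef : mutualInfoFin μ V X = shannonEntropy μ V - condEntropyGen μ V X := rfl
  have hIbound : (μ {ω | ρ (Vhat ω) (V ω) ≤ t}).toReal
        * Real.log ((Fintype.card 𝒱 : ℝ) / Nmax)
      ≤ mutualInfoFin μ V X + Real.log 2 := by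
    rw [hIdef, hH]
    linarith
  have hdiv : (μ {ω | ρ (Vhat ω) (V ω) ≤ t}).toReal
      ≤ (mutualInfoFin μ V X + Real.log 2) / Real.log ((Fintype.card 𝒱 : ℝ) / Nmax) := by
    rw [le_div_iff₀ hLpos]
    exact hIbound
  rw [ge_iff_le, hpE]
  linarith
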